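/- If s^{k+1} a ≤_A a for some k ≥ 0, then a↓ = ∞. -/

import Mathlib

/-- Size expressions of the size algebra A: a ::= α | s a | ∞. -/
inductive SExpr : Type
  | var : ℕ → SExpr
  | s : SExpr → SExpr
  | infty : SExpr
deriving DecidableEq

/-- The quasi-ordering ≤_A on size expressions. -/
inductive SLe : SExpr → SExpr → Prop
  | refl (a) : SLe a a
  | trans {a b c} : SLe a b → SLe b c → SLe a c
  | mon {a b} : SLe a b → SLe (.s a) (.s b)
  | succ {a b} : SLe a b → SLe a (.s b)
  | infty (a) : SLe a .infty

/-- Normal form w.r.t. the rewrite rule s∞ → ∞. -/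
def nf : SExpr → SExpr
  | .var α => .var α
  | .infty => .infty
  | .s a =>
    match nf a with
    | .infty => .infty
    | b => .s b

/-- Action of a size substitution on size expressions. -/
def subst (φ : ℕ → SExpr) : SExpr → SExpr
  | .var α => φ α
  | .s a => .s (subst φ a)
  | .infty => .infty

/-- Interpretation into ℕ∞. -/
def ev : SExpr → ℕ∞
  | .var _ => 0
  | .s a => ev a + 1
  | .infty => ⊤

lemma ev_mono {a b : SExpr} (h : SLe a b) : ev a ≤ ev b := by
  induction h with
  | refl => exact le_rfl
  | trans _ _ ih1 ih2 => exact ih1.trans ih2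
  | mon _ ih => exact add_le_add_left ih 1
  | succ _ ih => exact ih.trans (le_add_right le_rfl)
  | infty => exact le_top

lemma ev_iter (n : ℕ) (a : SExpr) : ev (SExpr.s^[n] a) = ev a + n := by
  induction n with
  | zero => simp
  | succ n ih =>
      rw [Function.iterate_succ_apply']
      show ev (SExpr.s^[n] a) + 1 = _
      rw [ih]
      push_cast
      ring

lemma nf_of_ev_top {a : SExpr} (h : ev a = ⊤) : nf a = .infty := by
  induction a with
  | var α => simp [ev] at h
  | infty => rfl
  | s a ih =>
      have h' : ev a + 1 = ⊤ := h
      rw [ENat.add_eq_top] at h'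
      have : ev a = ⊤ := h'.resolve_right (by simp)
      simp [nf, ih this]

/-- If s^{k+1} a ≤_A a then the normal form of a is ∞. -/
theorem nf_eq_infty_of_succ_le (a : SExpr) (k : ℕ)
    (h : SLe (SExpr.s^[k + 1] a) a) :
    nf a = .infty := by
  apply nf_of_ev_top
  have hle := ev_mono h
  rw [ev_iter] at hle
  by_contra hne
  lift ev a to ℕ using hne with n
  have : (n : ℕ∞) + (k + 1 : ℕ) = ((n + (k + 1) : ℕ) : ℕ∞) := by push_cast; ring
  rw [this, Nat.cast_le] at hle
  omega
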